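/- arXiv:2211.08807 — 3 statements merged into one kernel-verified Lean document; each statement's English description precedes it below -/
import Mathlib

section
/- Define on the space L = g((x)) × g[x]/x^n g[x] (for g a simple Lie algebra with Killing form κ, n ≥ 0, and a Laurent series α(x) = x^{-n} + α_{n-2}x^{-n+1} + ⋯) the bilinear form B(a⊗(f,[p]), b⊗(g,[q])) = κ(a,b)·res_0(α·(fg − pq)). Then B is symmetric, invariant, and the diagonal Δ = {(f,[f]) : f ∈ g[[x]]} is isotropic with respect to B: B(u,v) = 0 for all u,v ∈ Δ. -/
noncomputable section ManinCore

open scoped BigOperators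
open HahnSeries

variable {F : Type} [Field F] {g : Type} [LieRing g] [LieAlgebra F g] {d n : ℕ}

/-- A Lie ring viewed as a non-unital non-associative semiring with `*` given by the bracket. -/
@[reducible]
def lieMulStruct (g : Type) [LieRing g] : NonUnitalNonAssocSemiring g :=
  { (inferInstance : AddCommMonoid g) with
    mul := fun a b => ⁅a, b⁆
    left_distrib := fun a b c => lie_add a b c
    right_distrib := fun a b c => add_lie a b c
    zero_mul := zero_lie
    mul_zero := lie_zero }

/-- Convolution Lie bracket on `g`-valued formal (Hahn/Laurent) series `g((x))`. -/
def bracketLau (u v : HahnSeries ℤ g) : HahnSeries ℤ g :=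
  letI := lieMulStruct g
  u * v

/-- The truncated Lie bracket on `g[x]/x^n g[x]`, represented as `Fin n → g`. -/
def bracketTr (p q : Fin n → g) : Fin n → g :=
  fun m => ∑ i : Fin n, ∑ j : Fin n, if (i : ℕ) + (j : ℕ) = (m : ℕ) then ⁅p i, q j⁆ else 0

/-- The Lie algebra `L(n,α) = g((x)) × g[x]/x^n g[x]` (as an `F`-module). -/
abbrev LL (g : Type) [AddCommGroup g] (n : ℕ) := HahnSeries ℤ g × (Fin n → g)

/-- Componentwise bracket on `L(n,α)`. -/
def bracketLL (z w : LL g n) : LL g n := (bracketLau z.1 w.1, bracketTr z.2 w.2)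

variable (F g n) in
/-- The diagonal `Δ = {(f,[f]) | f ∈ g[[x]]} ⊆ L(n,α)`. -/
def Delta [Module F g] : Submodule F (LL g n) where
  carrier := {z | (∀ k : ℤ, k < 0 → z.1.coeff k = 0) ∧ ∀ m : Fin n, z.2 m = z.1.coeff (m : ℤ)}
  add_mem' := by
    rintro a b ⟨ha1, ha2⟩ ⟨hb1, hb2⟩
    refine ⟨fun k hk => ?_, fun m => ?_⟩
    · simp [HahnSeries.coeff_add, ha1 k hk, hb1 k hk]
    · simp [HahnSeries.coeff_add, ha2 m, hb2 m]
  zero_mem' := by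
    exact ⟨fun k _ => rfl, fun m => rfl⟩
  smul_mem' := by
    rintro c a ⟨ha1, ha2⟩
    refine ⟨fun k hk => ?_, fun m => ?_⟩
    · simp [HahnSeries.coeff_smul, ha1 k hk]
    · simp [HahnSeries.coeff_smul, ha2 m]

/-- Residue-type bilinear pairing on the Laurent part: `res₀(α·κ(u,v))`. -/
def BLau (κ : g →ₗ[F] g →ₗ[F] F) (α : LaurentSeries F) (u v : HahnSeries ℤ g) : F :=
  ∑ᶠ (i : ℤ) (j : ℤ), α.coeff i * κ (u.coeff j) (v.coeff (-1 - i - j))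

/-- Pairing on the truncated part: `res₀(α·κ(p,q))`. -/
def BTr (κ : g →ₗ[F] g →ₗ[F] F) (α : LaurentSeries F) (p q : Fin n → g) : F :=
  ∑ i : Fin n, ∑ j : Fin n, α.coeff (-1 - (i : ℕ) - (j : ℕ)) * κ (p i) (q j)

/-- The bilinear form `B` on `L(n,α)`: `B((f,p),(g,q)) = res₀(α(fg − pq))` (κ-valued). -/
def BB (κ : g →ₗ[F] g →ₗ[F] F) (α : LaurentSeries F) (z w : LL g n) : F :=
  BLau κ α z.1 w.1 - BTr κ α z.2 w.2

variable (g n) in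
/-- The elements `w_{k,i}` from the expansion of `y^nΩ/(x-y)` in `(L(n,α) ⊗ g)[[y]]`. -/
def wElt (b : Fin d → g) (k : ℕ) (i : Fin d) : LL g n :=
  if k < n then (0, fun m => if (m : ℕ) = n - 1 - k then -(b i) else 0)
  else (HahnSeries.single ((n : ℤ) - 1 - k) (b i), 0)

/-- Multiplication of a `g`-valued Laurent series by a scalar power series. -/
def psSmulLau (s : PowerSeries F) (u : HahnSeries ℤ g) : HahnSeries ℤ g :=
  (HahnModule.of F).symm ((HahnSeries.ofPowerSeries ℤ F s) • (HahnModule.of F u))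

/-- Multiplication of a truncated polynomial by a power series. -/
def psSmulTr (s : PowerSeries F) (p : Fin n → g) : Fin n → g :=
  fun m => ∑ j : Fin n, if (j : ℕ) ≤ (m : ℕ) then (PowerSeries.coeff ((m : ℕ) - j)) s • p j else 0

/-- Componentwise multiplication of an element of `L(n,α)` by a power series. -/
def psSmulLL (s : PowerSeries F) (z : LL g n) : LL g n := (psSmulLau s z.1, psSmulTr s z.2)

/-- The diagonal monomial `b_i(y^k, [y^k]) ∈ Δ ⊆ L(n,α)`. -/
def diagMono (b : Fin d → g) (k : ℕ) (i : Fin d) : LL g n :=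
  (HahnSeries.single (k : ℤ) (b i), fun m => if (m : ℕ) = k then b i else 0)

/-- The `g`-valued Hahn series with coefficients `γ : ℕ → g` in nonnegative degrees. -/
def ofNatCoeff (γ : ℕ → g) : HahnSeries ℤ g :=
  HahnSeries.embDomain Nat.castOrderEmbedding
    ⟨γ, Set.IsWF.isPWO ((wellFounded_lt).wellFoundedOn :
      (Function.support γ).WellFoundedOn (· < ·))⟩

/-- The diagonal element of `L(n,α)` corresponding to a formal power series with
basis coefficients `γ : ℕ → Fin d → F` (i.e. `∑ γ ℓ j • b_j x^ℓ`). -/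
def diagOf [Module F g] (b : Fin d → g) (γ : ℕ → Fin d → F) : LL g n :=
  (ofNatCoeff (fun ℓ => ∑ j, γ ℓ j • b j), fun m => ∑ j, γ (m : ℕ) j • b j)


lemma BLau_eq_sum (κ : g →ₗ[F] g →ₗ[F] F) (α : LaurentSeries F)
    {u v : HahnSeries ℤ g} {lα lu lv : ℤ}
    (hα : ∀ k, k < lα → α.coeff k = 0)
    (hu : ∀ k, k < lu → u.coeff k = 0)
    (hv : ∀ k, k < lv → v.coeff k = 0) :
    BLau κ α u v = ∑ i ∈ Finset.Icc lα (-1 - lu - lv), ∑ j ∈ Finset.Icc lu (-1 - i - lv),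
      α.coeff i * κ (u.coeff j) (v.coeff (-1 - i - j)) := by
  unfold BLau
  rw [finsum_eq_sum_of_support_subset]
  · refine Finset.sum_congr rfl fun i _ => ?_
    rw [finsum_eq_sum_of_support_subset]
    intro j hj
    simp only [Function.mem_support, ne_eq] at hj
    simp only [Finset.coe_Icc, Set.mem_Icc]
    constructor
    · by_contra h
      exact hj (by rw [hu j (by omega)]; simp)
    · by_contra h
      exact hj (by rw [hv (-1 - i - j) (by omega)]; simp)
  · intro i hi
    simp only [Function.mem_support, ne_eq] at hi
    simp only [Finset.coe_Icc, Set.mem_Icc]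
    constructor
    · by_contra h
      exact hi (finsum_eq_zero_of_forall_eq_zero fun j => by rw [hα i (by omega)]; simp)
    · by_contra h
      refine hi (finsum_eq_zero_of_forall_eq_zero fun j => ?_)
      rcases lt_or_ge j lu with hj | hj
      · rw [hu j hj]; simp
      · rw [hv (-1 - i - j) (by omega)]; simp

lemma BLau_symm (κ : g →ₗ[F] g →ₗ[F] F) (hκsymm : ∀ x y : g, κ x y = κ y x)
    (α : LaurentSeries F) (u v : HahnSeries ℤ g) :
    BLau κ α u v = BLau κ α v u := by
  unfold BLau
  refine finsum_congr fun i => ?_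
  have e : ℤ ≃ ℤ := ⟨fun j => -1 - i - j, fun j => -1 - i - j, fun j => by ring, fun j => by ring⟩
  rw [← finsum_comp_equiv (⟨fun j => -1 - i - j, fun j => -1 - i - j, fun j => by ring,
    fun j => by ring⟩ : ℤ ≃ ℤ) (f := fun j => α.coeff i * κ (v.coeff j) (u.coeff (-1 - i - j)))]
  refine finsum_congr fun j => ?_
  simp only [Equiv.coe_fn_mk]
  have h1 : -1 - i - (-1 - i - j) = j := by ring
  rw [h1, hκsymm]

lemma brack_coeff (u v : HahnSeries ℤ g) (j : ℤ) {lu lv : ℤ}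
    (hu : ∀ k, k < lu → u.coeff k = 0)
    (hv : ∀ k, k < lv → v.coeff k = 0) :
    (bracketLau u v).coeff j = ∑ a ∈ Finset.Icc lu (j - lv), ⁅u.coeff a, v.coeff (j - a)⁆ := by
  letI := lieMulStruct g
  have hmc : (bracketLau u v).coeff j =
      ∑ ij ∈ Finset.antidiagonal u.isPWO_support v.isPWO_support j,
        ⁅u.coeff ij.fst, v.coeff ij.snd⁆ := HahnSeries.coeff_mul
  have hmap : ∑ ij ∈ (Finset.Icc lu (j - lv)).map
      ⟨fun a => ((a, j - a) : ℤ × ℤ), fun a b h => by simpa using (Prod.mk.injEq .. ▸ h).1⟩,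
      ⁅u.coeff ij.1, v.coeff ij.2⁆ = ∑ a ∈ Finset.Icc lu (j - lv), ⁅u.coeff a, v.coeff (j - a)⁆ :=
    Finset.sum_map _ _ _
  rw [hmc, ← hmap]
  refine Finset.sum_subset ?_ ?_
  · rintro ⟨a, b⟩ hab
    rw [Finset.mem_addAntidiagonal] at hab
    obtain ⟨ha, hb, hsum⟩ := hab
    simp only [Finset.mem_map, Finset.mem_Icc, Function.Embedding.coeFn_mk]
    refine ⟨a, ⟨?_, ?_⟩, by simp [← hsum]⟩
    · by_contra h; exact ha (hu a (by omega))
    · have : lv ≤ b := by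
        by_contra h; exact hb (hv b (by omega))
      omega
  · rintro ⟨a, b⟩ hab hnab
    simp only [Finset.mem_map, Finset.mem_Icc, Function.Embedding.coeFn_mk] at hab
    obtain ⟨a', ⟨h1, h2⟩, heq⟩ := hab
    injection heq with hA hB
    subst hA hB
    by_cases hc : u.coeff a' = 0
    · rw [hc, zero_lie]
    by_cases hc2 : v.coeff (j - a') = 0
    · rw [hc2, lie_zero]
    exact absurd (Finset.mem_addAntidiagonal.2
      ⟨(u.mem_support a').2 hc, (v.mem_support _).2 hc2, by omega⟩) hnab

lemma brack_low (u v : HahnSeries ℤ g) {lu lv : ℤ}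
    (hu : ∀ k, k < lu → u.coeff k = 0)
    (hv : ∀ k, k < lv → v.coeff k = 0) :
    ∀ k, k < lu + lv → (bracketLau u v).coeff k = 0 := by
  intro k hk
  rw [brack_coeff u v k hu hv]
  refine Finset.sum_eq_zero fun a ha => ?_
  rw [Finset.mem_Icc] at ha
  rw [hv (k - a) (by omega), lie_zero]

lemma BLau_inv (κ : g →ₗ[F] g →ₗ[F] F)
    (hκinv : ∀ x y z : g, κ ⁅x, y⁆ z = κ x ⁅y, z⁆)
    (α : LaurentSeries F) (u v w : HahnSeries ℤ g) :
    BLau κ α (bracketLau u v) w = BLau κ α u (bracketLau v w) := by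
  have hα : ∀ k, k < α.order → α.coeff k = 0 := fun k hk => coeff_eq_zero_of_lt_order hk
  have hu : ∀ k, k < u.order → u.coeff k = 0 := fun k hk => coeff_eq_zero_of_lt_order hk
  have hv : ∀ k, k < v.order → v.coeff k = 0 := fun k hk => coeff_eq_zero_of_lt_order hk
  have hw : ∀ k, k < w.order → w.coeff k = 0 := fun k hk => coeff_eq_zero_of_lt_order hk
  rw [BLau_eq_sum κ α hα (brack_low u v hu hv) hw,
      BLau_eq_sum κ α hα hu (brack_low v w hv hw)]
  have hIcc : (-1 - (u.order + v.order) - w.order) = (-1 - u.order - (v.order + w.order)) := by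
    ring
  rw [hIcc]
  refine Finset.sum_congr rfl fun i _ => ?_
  have lhs_eq : ∀ j : ℤ, α.coeff i * κ ((bracketLau u v).coeff j) (w.coeff (-1 - i - j)) =
      ∑ a ∈ Finset.Icc u.order (j - v.order),
        α.coeff i * κ (u.coeff a) ⁅v.coeff (j - a), w.coeff (-1 - i - j)⁆ := by
    intro j
    rw [brack_coeff u v j hu hv, map_sum, LinearMap.coe_sum, Finset.sum_apply,
      Finset.mul_sum]
    exact Finset.sum_congr rfl fun a _ => by rw [hκinv]
  have rhs_eq : ∀ a : ℤ, α.coeff i * κ (u.coeff a) ((bracketLau v w).coeff (-1 - i - a)) =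
      ∑ b ∈ Finset.Icc v.order ((-1 - i - a) - w.order),
        α.coeff i * κ (u.coeff a) ⁅v.coeff b, w.coeff (-1 - i - a - b)⁆ := by
    intro a
    rw [brack_coeff v w (-1 - i - a) hv hw, map_sum, Finset.mul_sum]
  simp only [lhs_eq, rhs_eq]
  rw [Finset.sum_sigma', Finset.sum_sigma']
  refine Finset.sum_nbij' (fun p => ⟨p.2, p.1 - p.2⟩) (fun p => ⟨p.1 + p.2, p.1⟩)
    ?_ ?_ ?_ ?_ ?_
  · rintro ⟨j, a⟩ hp
    simp only [Finset.mem_sigma, Finset.mem_Icc] at hp ⊢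
    omega
  · rintro ⟨a, b⟩ hp
    simp only [Finset.mem_sigma, Finset.mem_Icc] at hp ⊢
    omega
  · rintro ⟨j, a⟩ _; simp
  · rintro ⟨a, b⟩ _; simp
  · rintro ⟨j, a⟩ _
    have : -1 - i - j = -1 - i - a - (j - a) := by ring
    rw [this]

lemma BTr_symm (κ : g →ₗ[F] g →ₗ[F] F) (hκsymm : ∀ x y : g, κ x y = κ y x)
    (α : LaurentSeries F) (p q : Fin n → g) : BTr κ α p q = BTr κ α q p := by
  unfold BTr
  rw [Finset.sum_comm]
  refine Finset.sum_congr rfl fun i _ => Finset.sum_congr rfl fun j _ => ?_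
  rw [hκsymm]
  congr 2
  ring

lemma fin_sum_ite (c : ℕ) (v : F) :
    ∑ m : Fin n, (if c = (m : ℕ) then v else 0) = if c < n then v else 0 := by
  by_cases h : c < n
  · rw [if_pos h, Finset.sum_eq_single (⟨c, h⟩ : Fin n)]
    · simp
    · intro m _ hm
      exact if_neg fun hc => hm (Fin.ext (by simp [← hc]))
    · simp
  · rw [if_neg h]
    exact Finset.sum_eq_zero fun m _ => if_neg (by have := m.isLt; omega)

lemma BTr_inv (κ : g →ₗ[F] g →ₗ[F] F)
    (hκinv : ∀ x y z : g, κ ⁅x, y⁆ z = κ x ⁅y, z⁆)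
    (α : LaurentSeries F)
    (hαlow : ∀ k : ℤ, k < -(n : ℤ) → α.coeff k = 0)
    (p q r : Fin n → g) :
    BTr κ α (bracketTr p q) r = BTr κ α p (bracketTr q r) := by
  have expandL : ∀ m j : Fin n, κ (bracketTr p q m) (r j) =
      ∑ a : Fin n, ∑ b : Fin n,
        if (a : ℕ) + (b : ℕ) = (m : ℕ) then κ ⁅p a, q b⁆ (r j) else 0 := by
    intro m j
    simp only [bracketTr, map_sum, LinearMap.coe_sum, Finset.sum_apply]
    refine Finset.sum_congr rfl fun a _ => Finset.sum_congr rfl fun b _ => ?_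
    by_cases h : (a : ℕ) + (b : ℕ) = (m : ℕ) <;> simp [h]
  have expandR : ∀ a m : Fin n, κ (p a) (bracketTr q r m) =
      ∑ b : Fin n, ∑ j : Fin n,
        if (b : ℕ) + (j : ℕ) = (m : ℕ) then κ (p a) ⁅q b, r j⁆ else 0 := by
    intro a m
    simp only [bracketTr, map_sum]
    refine Finset.sum_congr rfl fun b _ => Finset.sum_congr rfl fun j _ => ?_
    by_cases h : (b : ℕ) + (j : ℕ) = (m : ℕ) <;> simp [h]
  unfold BTr
  simp only [expandL, expandR, Finset.mul_sum, mul_ite, mul_zero]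
  -- LHS : ∑ m ∑ j ∑ a ∑ b ; RHS : ∑ a ∑ m ∑ b ∑ j
  trans ∑ a : Fin n, ∑ b : Fin n, ∑ j : Fin n,
      α.coeff (-1 - (a : ℕ) - (b : ℕ) - (j : ℕ)) * κ (p a) ⁅q b, r j⁆
  · conv_lhs => rw [Finset.sum_comm]
    conv_lhs => enter [2, j]; rw [Finset.sum_comm]
    conv_lhs => enter [2, j, 2, a]; rw [Finset.sum_comm]
    conv_lhs => rw [Finset.sum_comm]
    conv_lhs => enter [2, a]; rw [Finset.sum_comm]
    -- now ∑ a ∑ b ∑ j ∑ m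
    refine Finset.sum_congr rfl fun a _ => Finset.sum_congr rfl fun b _ =>
      Finset.sum_congr rfl fun j _ => ?_
    have step : (∑ m : Fin n, if (a : ℕ) + (b : ℕ) = (m : ℕ) then
        α.coeff (-1 - (m : ℕ) - (j : ℕ)) * κ ⁅p a, q b⁆ (r j) else 0)
        = ∑ m : Fin n, if (a : ℕ) + (b : ℕ) = (m : ℕ) then
        α.coeff (-1 - (a : ℕ) - (b : ℕ) - (j : ℕ)) * κ (p a) ⁅q b, r j⁆ else 0 := by
      refine Finset.sum_congr rfl fun m _ => ?_
      by_cases h : (a : ℕ) + (b : ℕ) = (m : ℕ)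
      · rw [if_pos h, if_pos h, hκinv]
        congr 2
        omega
      · rw [if_neg h, if_neg h]
    rw [step, fin_sum_ite]
    by_cases h : (a : ℕ) + (b : ℕ) < n
    · rw [if_pos h]
    · rw [if_neg h, hαlow _ (by push_cast; omega), zero_mul]
  · symm
    conv_lhs => enter [2, a]; rw [Finset.sum_comm]
    conv_lhs => enter [2, a, 2, b]; rw [Finset.sum_comm]
    -- now ∑ a ∑ b ∑ j ∑ m
    refine Finset.sum_congr rfl fun a _ => Finset.sum_congr rfl fun b _ =>
      Finset.sum_congr rfl fun j _ => ?_
    have step : (∑ m : Fin n, if (b : ℕ) + (j : ℕ) = (m : ℕ) then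
        α.coeff (-1 - (a : ℕ) - (m : ℕ)) * κ (p a) ⁅q b, r j⁆ else 0)
        = ∑ m : Fin n, if (b : ℕ) + (j : ℕ) = (m : ℕ) then
        α.coeff (-1 - (a : ℕ) - (b : ℕ) - (j : ℕ)) * κ (p a) ⁅q b, r j⁆ else 0 := by
      refine Finset.sum_congr rfl fun m _ => ?_
      by_cases h : (b : ℕ) + (j : ℕ) = (m : ℕ)
      · rw [if_pos h, if_pos h]
        congr 2
        omega
      · rw [if_neg h, if_neg h]
    rw [step, fin_sum_ite]
    by_cases h : (b : ℕ) + (j : ℕ) < n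
    · rw [if_pos h]
    · rw [if_neg h, hαlow _ (by push_cast; omega), zero_mul]

lemma iso (κ : g →ₗ[F] g →ₗ[F] F) (α : LaurentSeries F)
    (hαlow : ∀ k : ℤ, k < -(n : ℤ) → α.coeff k = 0)
    (f gg : HahnSeries ℤ g) (p q : Fin n → g)
    (hf : ∀ k : ℤ, k < 0 → f.coeff k = 0)
    (hg : ∀ k : ℤ, k < 0 → gg.coeff k = 0)
    (hp : ∀ m : Fin n, p m = f.coeff (m : ℤ))
    (hq : ∀ m : Fin n, q m = gg.coeff (m : ℤ)) :
    BLau κ α f gg - BTr κ α p q = 0 := by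
  rw [sub_eq_zero]
  rw [BLau_eq_sum κ α hαlow hf hg]
  unfold BTr
  -- turn BTr into a sum over pairs and split
  rw [← Finset.sum_product']
  rw [← Finset.sum_filter_add_sum_filter_not (Finset.univ ×ˢ Finset.univ)
    (fun x : Fin n × Fin n => (x.1 : ℕ) + (x.2 : ℕ) < n)]
  have h2 : ∑ x ∈ (Finset.univ ×ˢ Finset.univ).filter
      (fun x : Fin n × Fin n => ¬((x.1 : ℕ) + (x.2 : ℕ) < n)),
      α.coeff (-1 - (x.1 : ℕ) - (x.2 : ℕ)) * κ (p x.1) (q x.2) = 0 := by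
    refine Finset.sum_eq_zero fun x hx => ?_
    rw [Finset.mem_filter] at hx
    rw [hαlow _ (by push_cast; omega), zero_mul]
  rw [h2, add_zero]
  rw [Finset.sum_sigma']
  refine Finset.sum_bij'
    (fun x hx => ((⟨x.2.toNat, ?_⟩ : Fin n), (⟨(-1 - x.1 - x.2).toNat, ?_⟩ : Fin n)))
    (fun x hx => (⟨-1 - (x.1 : ℕ) - (x.2 : ℕ), (x.1 : ℕ)⟩ : Σ _ : ℤ, ℤ))
    ?_ ?_ ?_ ?_ ?_
  · rcases x with ⟨i, j⟩
    simp only [Finset.mem_sigma, Finset.mem_Icc] at hx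
    dsimp only
    omega
  · rcases x with ⟨i, j⟩
    simp only [Finset.mem_sigma, Finset.mem_Icc] at hx
    dsimp only
    omega
  · rintro ⟨i, j⟩ hx
    simp only [Finset.mem_sigma, Finset.mem_Icc] at hx
    simp only [Finset.mem_filter, Finset.mem_product, Finset.mem_univ, true_and]
    omega
  · rintro ⟨i, j⟩ hx
    simp only [Finset.mem_filter, Finset.mem_product, Finset.mem_univ, true_and] at hx
    simp only [Finset.mem_sigma, Finset.mem_Icc]
    have := i.isLt
    have := j.isLt
    omega
  · rintro ⟨i, j⟩ hx
    simp only [Finset.mem_sigma, Finset.mem_Icc] at hx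
    simp only [Sigma.mk.inj_iff]
    constructor
    · omega
    · exact heq_of_eq (by omega)
  · rintro ⟨i, j⟩ hx
    simp only [Finset.mem_filter, Finset.mem_product, Finset.mem_univ, true_and] at hx
    simp only [Prod.mk.injEq]
    constructor <;> (ext; dsimp only; omega)
  · rintro ⟨i, j⟩ hx
    simp only [Finset.mem_sigma, Finset.mem_Icc] at hx
    rw [hp, hq]
    simp only [Fin.val_mk]
    have hj : ((j.toNat : ℕ) : ℤ) = j := by omega
    have hk : (((-1 - i - j).toNat : ℕ) : ℤ) = -1 - i - j := by omega
    rw [hj, hk, show -1 - j - (-1 - i - j) = i from by ring]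

/-- On `L(n,α) = g((x)) × g[x]/xⁿg[x]` the bilinear form
`B(a⊗(f,[p]), b⊗(g,[q])) = κ(a,b)·res₀(α(fg−pq))` is symmetric, invariant, and the
diagonal `Δ = {(f,[f]) : f ∈ g[[x]]}` is isotropic. -/
theorem stmt4 (n : ℕ) (κ : g →ₗ[F] g →ₗ[F] F)
    (hκsymm : ∀ x y : g, κ x y = κ y x)
    (hκinv : ∀ x y z : g, κ ⁅x, y⁆ z = κ x ⁅y, z⁆)
    (hκnd : ∀ x : g, (∀ y : g, κ x y = 0) → x = 0)
    (α : LaurentSeries F)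
    (hα1 : α.coeff (-(n : ℤ)) = 1)
    (hαlow : ∀ k : ℤ, k < -(n : ℤ) → α.coeff k = 0) :
    (∀ z w : LL g n, BB κ α z w = BB κ α w z) ∧
    (∀ z₁ z₂ z₃ : LL g n, BB κ α (bracketLL z₁ z₂) z₃ = BB κ α z₁ (bracketLL z₂ z₃)) ∧
    (∀ z ∈ Delta F g n, ∀ w ∈ Delta F g n, BB κ α z w = 0) := by
  refine ⟨fun z w => ?_, fun z₁ z₂ z₃ => ?_, fun z hz w hw => ?_⟩
  · unfold BB
    rw [BLau_symm κ hκsymm α z.1 w.1, BTr_symm κ hκsymm α z.2 w.2]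
  · show BLau κ α (bracketLau z₁.1 z₂.1) z₃.1 - BTr κ α (bracketTr z₁.2 z₂.2) z₃.2 =
      BLau κ α z₁.1 (bracketLau z₂.1 z₃.1) - BTr κ α z₁.2 (bracketTr z₂.2 z₃.2)
    rw [BLau_inv κ hκinv α z₁.1 z₂.1 z₃.1, BTr_inv κ hκinv α hαlow z₁.2 z₂.2 z₃.2]
  · obtain ⟨hz1, hz2⟩ := hz
    obtain ⟨hw1, hw2⟩ := hw
    exact iso κ α hαlow z.1 w.1 z.2 w.2 hz1 hw1 hz2 hw2

end ManinCore
end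

section
/- Let n ≥ 0 and s(x) = ∑_{k≥0} s_k x^k ∈ F[[x]]^×. Define w_{k,i} ∈ L(n,α) = g((x)) ⊕ g[x]/x^n g[x] by w_{k,i} = b_i·(0, −x^{(n-1)-k}) for 0 ≤ k ≤ n−1 and w_{k,i} = b_i·(x^{(n-1)-k}, 0) for k ≥ n, where {b_i} is a κ-orthonormal basis of g. Then with respect to the bilinear form B with functional t(f,[p]) = res_0(α·(f−p)) where α(x) = 1/(x^n s(x)) + (terms making x^n α ∈ F[[x]]^×), one has: B(s·w_{k,i}, b_j·(y^ℓ,[y^ℓ])) = δ_{ij} δ_{kℓ}, i.e. the elements s·w_{k,i} form a system dual to the monomial basis b_j(y^ℓ,[y^ℓ]) of the diagonal. -/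
noncomputable section ManinCore

open scoped BigOperators
open HahnSeries

variable {F : Type} [Field F] {g : Type} [LieRing g] [LieAlgebra F g] {d n : ℕ}

lemma ofPS_coeff_neg (s : PowerSeries F) (m : ℤ) (hm : m < 0) :
    (ofPowerSeries ℤ F s).coeff m = 0 := by
  rw [ofPowerSeries_apply]
  apply embDomain_notin_range
  rintro ⟨a, ha⟩
  have ha' : ((a : ℕ) : ℤ) = m := ha
  omega

lemma ofPS_coeff_nat (s : PowerSeries F) (m : ℕ) :
    (ofPowerSeries ℤ F s).coeff (m : ℤ) = PowerSeries.coeff m s :=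
  ofPowerSeries_apply_coeff s m

lemma convZ (α : LaurentSeries F) (s : PowerSeries F) (n0 : ℤ)
    (hαs : α * ofPowerSeries ℤ F s = HahnSeries.single n0 1) (c : ℤ) :
    ∑ᶠ i : ℤ, α.coeff i * (ofPowerSeries ℤ F s).coeff (c - i)
      = if c = n0 then 1 else 0 := by
  classical
  set S := ofPowerSeries ℤ F s with hS
  have key : (α * S).coeff c = if c = n0 then 1 else 0 := by
    rw [hαs, HahnSeries.coeff_single]
    split <;> simp_all
  rw [HahnSeries.coeff_mul] at key
  set T := Finset.addAntidiagonal α.isPWO_support S.isPWO_support c with hT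
  have hsupp : (Function.support fun i => α.coeff i * S.coeff (c - i))
      ⊆ ↑(T.image Prod.fst) := by
    intro i hi
    simp only [Function.mem_support] at hi
    have h1 : α.coeff i ≠ 0 := fun h => hi (by rw [h, zero_mul])
    have h2 : S.coeff (c - i) ≠ 0 := fun h => hi (by rw [h, mul_zero])
    simp only [Finset.coe_image, Set.mem_image, Finset.mem_coe]
    exact ⟨(i, c - i), by rw [hT]; exact Finset.mem_addAntidiagonal.mpr ⟨h1, h2, by ring⟩, rfl⟩
  rw [finsum_eq_finset_sum_of_support_subset _ hsupp]
  rw [Finset.sum_image (fun p hp q hq hpq => ?_)]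
  · rw [← key]
    apply Finset.sum_congr rfl
    intro ij hij
    have h := (Finset.mem_addAntidiagonal.mp hij).2.2
    have h2 : c - ij.1 = ij.2 := by omega
    rw [h2]
  · have hp' := (Finset.mem_addAntidiagonal.mp hp).2.2
    have hq' := (Finset.mem_addAntidiagonal.mp hq).2.2
    exact Prod.ext hpq (by omega)

lemma convFin (α : LaurentSeries F) (s : PowerSeries F) (n : ℕ)
    (hαlow : ∀ k : ℤ, k < -(n : ℤ) → α.coeff k = 0)
    (hαs : α * ofPowerSeries ℤ F s = HahnSeries.single (-(n : ℤ)) 1)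
    (c : ℤ) (K : ℕ) (hK : c + n ≤ K) :
    ∑ bb ∈ Finset.range (K + 1), α.coeff (c - bb) * PowerSeries.coeff bb s
      = if c = -(n : ℤ) then 1 else 0 := by
  classical
  set S := ofPowerSeries ℤ F s with hS
  have key : (α * S).coeff c = if c = -(n:ℤ) then 1 else 0 := by
    rw [hαs, HahnSeries.coeff_single]
    split <;> simp_all
  rw [HahnSeries.coeff_mul] at key
  set T := Finset.addAntidiagonal α.isPWO_support S.isPWO_support c with hT
  have himg : T ⊆ (Finset.range (K + 1)).image
      (fun bb : ℕ => ((c - bb : ℤ), (bb : ℤ))) := by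
    rintro ⟨a, b'⟩ hab
    obtain ⟨ha, hb, hc⟩ := Finset.mem_addAntidiagonal.mp hab
    have hage : -(n:ℤ) ≤ a := by
      by_contra h
      exact ha (hαlow a (by omega))
    have hb0 : 0 ≤ b' := by
      by_contra h
      exact hb (ofPS_coeff_neg s b' (by omega))
    simp only [Finset.mem_image, Finset.mem_range]
    refine ⟨b'.toNat, by omega, ?_⟩
    simp only [Prod.mk.injEq]
    omega
  have hinj : ∀ x ∈ Finset.range (K+1), ∀ y ∈ Finset.range (K+1),
      (fun bb : ℕ => ((c - bb : ℤ), (bb : ℤ))) x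
        = (fun bb : ℕ => ((c - bb : ℤ), (bb : ℤ))) y → x = y := by
    intro x _ y _ h
    have h2 := congrArg Prod.snd h
    simp only at h2
    exact_mod_cast h2
  calc ∑ bb ∈ Finset.range (K + 1), α.coeff (c - bb) * PowerSeries.coeff bb s
      = ∑ ij ∈ (Finset.range (K + 1)).image (fun bb : ℕ => ((c - bb : ℤ), (bb : ℤ))),
          α.coeff ij.1 * S.coeff ij.2 := by
        rw [Finset.sum_image hinj]
        exact Finset.sum_congr rfl fun bb _ => by rw [hS, ofPS_coeff_nat]
    _ = ∑ ij ∈ T, α.coeff ij.1 * S.coeff ij.2 := by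
        refine (Finset.sum_subset himg ?_).symm
        intro ij hij hT'
        obtain ⟨bb, hbb, rfl⟩ := Finset.mem_image.mp hij
        by_cases h1 : α.coeff (c - bb) = 0
        · rw [h1, zero_mul]
        by_cases h2 : S.coeff (bb : ℤ) = 0
        · rw [h2, mul_zero]
        exact absurd (Finset.mem_addAntidiagonal.mpr ⟨by simpa using h1, by simpa using h2, by ring⟩) hT'
    _ = if c = -(n:ℤ) then 1 else 0 := key


lemma psSmulLau_single_coeff (s : PowerSeries F) (m0 : ℤ) (v : g) (m : ℤ) :
    (psSmulLau s (HahnSeries.single m0 v) : HahnSeries ℤ g).coeff m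
      = (HahnSeries.ofPowerSeries ℤ F s).coeff (m - m0) • v := by
  classical
  unfold psSmulLau
  rw [HahnModule.coeff_smul_right (Set.isPWO_singleton m0)
    (by simpa using HahnSeries.support_single_subset)]
  rw [Finset.sum_eq_single ((m - m0), m0)]
  · simp [HahnSeries.coeff_single]
  · rintro ⟨a1, a2⟩ hab hne
    obtain ⟨_, h2, h3⟩ := (Finset.mem_vaddAntidiagonal _ _).mp hab
    simp only [Set.mem_singleton_iff] at h2
    have h3' : a1 + a2 = m := h3
    exact absurd (Prod.ext (by omega) h2) hne
  · intro h
    by_cases hc : (HahnSeries.ofPowerSeries ℤ F s).coeff (m - m0) = 0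
    · simp [hc]
    by_cases hv : v = 0
    · simp [hv]
    exact absurd ((Finset.mem_vaddAntidiagonal _ _).mpr
      ⟨by simpa using hc, by simp [Set.mem_singleton_iff], by
        simpa using (by omega : m - m0 + m0 = m)⟩) h

lemma psSmulLau_zero (s : PowerSeries F) : (psSmulLau s (0 : HahnSeries ℤ g)) = 0 := by
  unfold psSmulLau
  simp

lemma psSmulTr_zero (s : PowerSeries F) : (psSmulTr s (0 : Fin n → g)) = 0 := by
  unfold psSmulTr
  funext m
  simp

/-- With `s = 1/(xⁿα(x)) ∈ F[[x]]ˣ` (i.e. `α·s = x⁻ⁿ`), the rescaled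
elements `s·w_{k,i} ∈ L(n,α)` form a system dual to the diagonal monomials
`b_j(y^ℓ,[y^ℓ])`: `B(s·w_{k,i}, b_j(y^ℓ,[y^ℓ])) = δ_{ij}δ_{kℓ}`. -/
theorem stmt5 (n : ℕ) (b : Module.Basis (Fin d) F g) (κ : g →ₗ[F] g →ₗ[F] F)
    (hκsymm : ∀ x y : g, κ x y = κ y x)
    (hκinv : ∀ x y z : g, κ ⁅x, y⁆ z = κ x ⁅y, z⁆)
    (horth : ∀ i j : Fin d, κ (b i) (b j) = if i = j then 1 else 0)
    (α : LaurentSeries F) (s : PowerSeries F)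
    (hs0 : PowerSeries.constantCoeff s ≠ 0)
    (hαlow : ∀ k : ℤ, k < -(n : ℤ) → α.coeff k = 0)
    (hαs : α * HahnSeries.ofPowerSeries ℤ F s = HahnSeries.single (-(n : ℤ)) 1) :
    ∀ (k l : ℕ) (i j : Fin d),
      BB κ α (psSmulLL s (wElt g n (⇑b) k i)) ((diagMono (⇑b) l j : LL g n))
        = if k = l ∧ i = j then 1 else 0 := by
  classical
  intro k l i j
  by_cases hk : k < n
  · -- truncated case
    have hn0 : 0 < n := Nat.lt_of_le_of_lt (Nat.zero_le k) hk
    have hBL : BLau κ α (psSmulLau s (0 : HahnSeries ℤ g))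
        (HahnSeries.single (l : ℤ) (b j)) = 0 := by
      rw [psSmulLau_zero]
      simp [BLau]
    have hstep : BB κ α (psSmulLL s (wElt g n (⇑b) k i)) (diagMono (⇑b) l j) =
        - BTr κ α (psSmulTr s (fun m : Fin n => if (m : ℕ) = n - 1 - k then -(b i) else 0))
          (fun m : Fin n => if (m : ℕ) = l then b j else 0) := by
      simp only [BB, psSmulLL, diagMono, wElt, if_pos hk]
      rw [hBL, zero_sub]
    rw [hstep]
    unfold BTr
    have hκP : ∀ m : Fin n,
        (κ (psSmulTr s (fun m : Fin n => if (m : ℕ) = n - 1 - k then -(b i) else 0) m)) (b j)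
          = if i = j then
              (if n - 1 - k ≤ (m : ℕ) then
                -(PowerSeries.coeff ((m : ℕ) - (n - 1 - k)) s) else 0)
            else 0 := by
      intro m
      unfold psSmulTr
      rw [map_sum, LinearMap.sum_apply]
      rw [Finset.sum_eq_single (⟨n - 1 - k, by omega⟩ : Fin n)]
      · by_cases hm : n - 1 - k ≤ (m : ℕ) <;> by_cases hij : i = j <;>
          simp [hm, hij, horth]
      · intro b' _ hb'
        have hb'' : ¬ ((b' : ℕ) = n - 1 - k) := fun h => hb' (Fin.ext h)
        simp [hb'']
      · intro h
        exact absurd (Finset.mem_univ _) h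
    by_cases hl : l < n
    · have hκite : ∀ (x : g) (c : Prop) [Decidable c] (v : g),
          (κ x) (if c then v else 0) = if c then (κ x) v else 0 := by
        intro x c _ v; split <;> simp
      have hnegite : ∀ (c : Prop) [Decidable c] (x : F),
          (if c then -x else 0) = -(if c then x else 0) := by
        intro c _ x; split <;> simp
      have hcond : ∀ m' : Fin n, ((m' : ℕ) = l) = (m' = (⟨l, hl⟩ : Fin n)) :=
        fun m' => by simp [Fin.ext_iff]
      simp only [hcond, hκite, mul_ite, mul_zero, Finset.sum_ite_eq', Finset.mem_univ,
        if_true, hκP]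
      by_cases hij : i = j
      · simp only [hij, eq_self_iff_true, if_true, and_true, mul_neg, hnegite,
          Finset.sum_neg_distrib, neg_neg]
        have key : (∑ m : Fin n, if n - 1 - k ≤ (m : ℕ) then
              α.coeff (-1 - ((m : ℕ) : ℤ) - (l : ℤ)) * PowerSeries.coeff ((m : ℕ) - (n - 1 - k)) s
            else 0) = if k = l then 1 else 0 := by
          rw [Fin.sum_univ_eq_sum_range (fun mm => if n - 1 - k ≤ mm then
              α.coeff (-1 - (mm : ℤ) - (l : ℤ)) * PowerSeries.coeff (mm - (n - 1 - k)) s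
            else 0) n]
          rw [← Finset.sum_filter]
          rw [show (Finset.range n).filter (fun mm => n - 1 - k ≤ mm)
              = Finset.Ico (n - 1 - k) n from by
            ext mm; simp only [Finset.mem_filter, Finset.mem_range, Finset.mem_Ico]; omega]
          rw [Finset.sum_Ico_eq_sum_range]
          rw [show n - (n - 1 - k) = k + 1 from by omega]
          have hfin := convFin α s n hαlow hαs (-1 - ((n - 1 - k : ℕ) : ℤ) - (l : ℤ)) k
            (by push_cast; omega)
          calc (∑ bb ∈ Finset.range (k + 1),
                α.coeff (-1 - ((n - 1 - k + bb : ℕ) : ℤ) - (l : ℤ))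
                  * PowerSeries.coeff (n - 1 - k + bb - (n - 1 - k)) s)
              = ∑ bb ∈ Finset.range (k + 1),
                  α.coeff ((-1 - ((n - 1 - k : ℕ) : ℤ) - (l : ℤ)) - bb)
                    * PowerSeries.coeff bb s := by
                apply Finset.sum_congr rfl
                intro bb _
                refine congrArg₂ (· * ·) (congrArg α.coeff (by push_cast; omega))
                  (congrArg (fun t => PowerSeries.coeff t s) (by omega))
            _ = if (-1 - ((n - 1 - k : ℕ) : ℤ) - (l : ℤ)) = -(n : ℤ) then 1 else 0 := hfin
            _ = if k = l then 1 else 0 := by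
                rw [if_congr (by omega : ((-1 - ((n - 1 - k : ℕ) : ℤ) - (l : ℤ)) = -(n : ℤ))
                  ↔ (k = l)) rfl rfl]
        rw [key]
      · simp [hij]
    · have hcond : ∀ m' : Fin n, ((m' : ℕ) = l) = False :=
        fun m' => by simp; omega
      simp only [hcond, if_false, map_zero, mul_zero, Finset.sum_const_zero, neg_zero]
      simp [show ¬(k = l) from by omega]
  · -- Laurent case
    have hw : wElt g n (⇑b) k i = (HahnSeries.single ((n : ℤ) - 1 - k) (b i), 0) := if_neg hk
    have hstep : BB κ α (psSmulLL s (wElt g n (⇑b) k i)) (diagMono (⇑b) l j) =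
        BLau κ α (psSmulLau s (HahnSeries.single ((n : ℤ) - 1 - k) (b i)))
          (HahnSeries.single (l : ℤ) (b j)) := by
      simp only [BB, psSmulLL, diagMono, hw, psSmulTr_zero]
      rw [show BTr κ α (0 : Fin n → g)
          (fun m : Fin n => if (m : ℕ) = l then b j else 0) = 0 from by simp [BTr], sub_zero]
    rw [hstep]
    unfold BLau
    have hinner : ∀ i' : ℤ,
        (∑ᶠ j' : ℤ, α.coeff i' *
            (κ ((psSmulLau s (HahnSeries.single ((n : ℤ) - 1 - k) (b i))).coeff j'))
              ((HahnSeries.single (l : ℤ) (b j)).coeff (-1 - i' - j')))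
        = α.coeff i' * ((HahnSeries.ofPowerSeries ℤ F s).coeff
            ((-1 - i' - l) - ((n : ℤ) - 1 - k)) * (if i = j then 1 else 0)) := by
      intro i'
      rw [finsum_eq_single _ (-1 - i' - (l : ℤ)) ?_]
      · rw [psSmulLau_single_coeff]
        rw [show -1 - i' - (-1 - i' - (l : ℤ)) = (l : ℤ) from by ring,
          HahnSeries.coeff_single_same]
        rw [map_smul, LinearMap.smul_apply, horth, smul_eq_mul]
      · intro x hx
        rw [HahnSeries.coeff_single_of_ne (by omega : (-1 - i' - x : ℤ) ≠ (l : ℤ))]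
        simp
    rw [finsum_congr hinner]
    by_cases hij : i = j
    · simp only [hij, eq_self_iff_true, if_true, and_true, mul_one]
      have hz := convZ α s (-(n : ℤ)) hαs (-1 - (l : ℤ) - ((n : ℤ) - 1 - k))
      have hre : (∑ᶠ i' : ℤ, α.coeff i' * (HahnSeries.ofPowerSeries ℤ F s).coeff
              ((-1 - i' - l) - ((n : ℤ) - 1 - k)))
          = ∑ᶠ i' : ℤ, α.coeff i' * (HahnSeries.ofPowerSeries ℤ F s).coeff
              ((-1 - (l : ℤ) - ((n : ℤ) - 1 - k)) - i') := by
        apply finsum_congr; intro i'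
        exact congrArg _ (congrArg _ (by ring))
      rw [hre, hz]
      rw [if_congr (by omega : ((-1 - (l : ℤ) - ((n : ℤ) - 1 - k)) = -(n : ℤ)) ↔ (k = l))
        rfl rfl]
    · simp [hij]

end ManinCore
end

section
/- Let L be a Lie algebra with invariant nondegenerate symmetric bilinear form B, W ⊂ L a Lagrangian subspace with L = g[[x]] ⊕ W, and s = ∑_i a_i ⊗ b^i ∈ (g⊗g)[[x,y]] a skew-symmetric tensor (viewing a_i, b^i ∈ g[[x]]). Then the twisted subspace W_s := { ∑_i B(b^i, w)a_i − w : w ∈ W } is again Lagrangian with respect to B and complementary to g[[x]]. -/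
/-- Let `L` be a Lie algebra with invariant nondegenerate symmetric
bilinear form `B`, let `G` (the copy of `g[[x]]`) and `W` be Lagrangian subspaces with
`L = G ⊕ W`.  A skew-symmetric tensor `s = ∑ aᵢ ⊗ bᵢ ∈ (g⊗g)[[x,y]]` is encoded by
the linear map `σ : L → L`, `w ↦ ∑ᵢ B(bᵢ,w)aᵢ`, with values in `G` and satisfying
`B(σu, v) = −B(σv, u)` (skew-symmetry of `s`).  Then the twisted subspace
`W_s = {σw − w : w ∈ W}` is again Lagrangian and complementary to `G`. -/
theorem stmt11 {F : Type} [Field F] [CharZero F] {L : Type} [LieRing L] [LieAlgebra F L]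
    (B : LinearMap.BilinForm F L)
    (hsymm : ∀ u v : L, B u v = B v u)
    (hinv : ∀ u v w : L, B ⁅u, v⁆ w = B u ⁅v, w⁆)
    (hnd : ∀ u : L, (∀ v : L, B u v = 0) → u = 0)
    (G W : Submodule F L)
    (hc : IsCompl G W)
    (hG : G = B.orthogonal G)
    (hW : W = B.orthogonal W)
    (σ : L →ₗ[F] L)
    (hrange : ∀ z : L, σ z ∈ G)
    (hskew : ∀ u v : L, B (σ u) v = -B (σ v) u) :
    Submodule.map (σ - LinearMap.id) W
        = B.orthogonal (Submodule.map (σ - LinearMap.id) W)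
      ∧ IsCompl G (Submodule.map (σ - LinearMap.id) W) := by
  set Ws := Submodule.map (σ - LinearMap.id) W with hWs
  -- basic orthogonality facts
  have hGG : ∀ u v : L, u ∈ G → v ∈ G → B u v = 0 := by
    intro u v hu hv
    have hv' : v ∈ B.orthogonal G := hG ▸ hv
    exact hv' u hu
  have hWW : ∀ u v : L, u ∈ W → v ∈ W → B u v = 0 := by
    intro u v hu hv
    have hv' : v ∈ B.orthogonal W := hW ▸ hv
    exact hv' u hu
  -- value of the map
  have hval : ∀ w : L, (σ - LinearMap.id : L →ₗ[F] L) w = σ w - w := by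
    intro w; simp
  have hmem : ∀ x : L, x ∈ Ws ↔ ∃ w ∈ W, σ w - w = x := by
    intro x
    constructor
    · rintro ⟨w, hw, rfl⟩; exact ⟨w, hw, (hval w).symm⟩
    · rintro ⟨w, hw, rfl⟩; exact ⟨w, hw, hval w⟩
  -- key computation
  have hkey : ∀ w w' : L, w ∈ W → w' ∈ W → B (σ w - w) (σ w' - w') = 0 := by
    intro w w' hw hw'
    have h1 : B (σ w) (σ w') = 0 := hGG _ _ (hrange w) (hrange w')
    have h2 : B w w' = 0 := hWW _ _ hw hw'
    have h3 : B w (σ w') = B (σ w') w := hsymm _ _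
    have h4 : B (σ w') w = -B (σ w) w' := hskew _ _
    simp only [map_sub, LinearMap.sub_apply, h1, h2]
    rw [h3, h4]; ring
  -- W_s ⊆ W_s^⊥
  have hsub : Ws ≤ B.orthogonal Ws := by
    intro x hx
    rw [hmem] at hx
    obtain ⟨w, hw, rfl⟩ := hx
    intro y hy
    rw [hmem] at hy
    obtain ⟨w', hw', rfl⟩ := hy
    exact hkey _ _ hw' hw
  -- decomposition of any element
  have hdec : ∀ x : L, ∃ g ∈ G, ∃ w ∈ W, x = g + w := by
    intro x
    obtain ⟨g, w, hg, hw, hx⟩ := Submodule.codisjoint_iff_exists_add_eq.mp hc.codisjoint x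
    exact ⟨g, hg, w, hw, hx.symm⟩
  -- W_s^⊥ ⊆ W_s
  have hsup : B.orthogonal Ws ≤ Ws := by
    intro u hu
    obtain ⟨g, hg, w, hw, rfl⟩ := hdec u
    -- v := g + σ w ∈ G, and v ∈ Ws^⊥
    set v : L := g + σ w with hv
    have hvG : v ∈ G := G.add_mem hg (hrange w)
    have hvorth : v ∈ B.orthogonal Ws := by
      have h1 : σ (-w) - (-w) ∈ Ws := (hmem _).2 ⟨-w, W.neg_mem hw, rfl⟩
      have h2 : σ (-w) - (-w) ∈ B.orthogonal Ws := hsub h1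
      have h3 : (g + w) - (σ (-w) - (-w)) ∈ B.orthogonal Ws :=
        (B.orthogonal Ws).sub_mem hu h2
      have : (g + w) - (σ (-w) - (-w)) = v := by
        rw [hv, map_neg]; abel
      rwa [this] at h3
    have hv0 : v = 0 := by
      apply hnd
      intro x
      obtain ⟨g', hg', w', hw', rfl⟩ := hdec x
      have h1 : B v g' = 0 := hGG _ _ hvG hg'
      have h2 : B v w' = 0 := by
        -- v ⊥ (σ w' - w'), and B (σ w') v = 0 since both in G
        have ha : σ w' - w' ∈ Ws := (hmem _).2 ⟨w', hw', rfl⟩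
        have hb : B (σ w' - w') v = 0 := hvorth _ ha
        have hcc : B (σ w') v = 0 := hGG _ _ (hrange w') hvG
        have : B w' v = 0 := by
          have h := hb
          simp only [map_sub, LinearMap.sub_apply, hcc, zero_sub, neg_eq_zero] at h
          exact h
        rw [hsymm]; exact this
      simp [map_add, h1, h2]
    -- hence u = σ(-w) - (-w) ∈ Ws
    have : g + w = σ (-w) - (-w) := by
      have h0 : g + σ w = 0 := hv0
      have hg' : g = -σ w := eq_neg_of_add_eq_zero_left h0
      rw [hg', map_neg]; abel
    rw [this]
    exact (hmem _).2 ⟨-w, W.neg_mem hw, rfl⟩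
  refine ⟨le_antisymm hsub hsup, ?_, ?_⟩
  · -- Disjoint G Ws
    rw [disjoint_iff_inf_le]
    intro x hx
    rw [Submodule.mem_inf] at hx
    obtain ⟨hxG, hxW⟩ := hx
    rw [hmem] at hxW
    obtain ⟨w, hw, hwx⟩ := hxW
    have hwG : w ∈ G := by
      have : w = σ w - x := by rw [← hwx]; abel
      rw [this]; exact G.sub_mem (hrange w) hxG
    have hw0 : w = 0 := by
      have := hc.disjoint
      rw [disjoint_iff_inf_le] at this
      exact (Submodule.mem_bot F).1 (this ⟨hwG, hw⟩)
    simp [← hwx, hw0]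
  · -- Codisjoint
    rw [codisjoint_iff_le_sup]
    intro x _
    obtain ⟨g, hg, w, hw, rfl⟩ := hdec x
    have h1 : g + σ w ∈ G := G.add_mem hg (hrange w)
    have h2 : σ (-w) - (-w) ∈ Ws := (hmem _).2 ⟨-w, W.neg_mem hw, rfl⟩
    have : g + w = (g + σ w) + (σ (-w) - (-w)) := by
      rw [map_neg]; abel
    rw [this]
    exact Submodule.add_mem _ (Submodule.mem_sup_left h1) (Submodule.mem_sup_right h2)
end
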